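/- With the data of K(8n,σ,τ) and P_i defined as P_i = ∏_{k=1}^{i-1} τ(a,a^k) (P_0 = P_1 = 1), for all i, j ≥ 0 one has P_{2i+1}^{2j} · σ(a)^j · σ(a^{2j})^i = P_{2j}^{2i} · σ(a^{2i+1})^j · (τ(b,a)/τ(b,a^{2i+1}))^j. -/

import Mathlib

/-- The group `G = Z_{2n} × Z_2`, written additively. -/
abbrev GK (n : ℕ) := ZMod (2 * n) × ZMod 2

/-- The generator `a` of order `2n`. -/
def aK (n : ℕ) : GK n := (1, 0)

/-- The generator `b` of order `2`. -/
def bK (n : ℕ) : GK n := (0, 1)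

/-- The order-2 automorphism `◁x` of `G` determined by `a ↦ ab`, `b ↦ b`. -/
def xK (n : ℕ) : GK n → GK n :=
  fun g => (g.1, g.2 + ZMod.castHom (dvd_mul_right 2 n) (ZMod 2) g.1)

/-- `P i = ∏_{m=1}^{i-1} τ(a, a^m)`, with `P 0 = P 1 = 1`. -/
def PK {k : Type*} [Field k] (n : ℕ) (τ : GK n → GK n → kˣ) (i : ℕ) : kˣ :=
  ∏ m ∈ Finset.Icc 1 (i - 1), τ (aK n) (m • aK n)


private lemma GK_bb (n : ℕ) : bK n + bK n = 0 := by ext <;> simp [bK]; decide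

private lemma GK_smul_a (n m : ℕ) : m • aK n = (((m:ℕ) : ZMod (2*n)), 0) := by
  ext <;> simp [aK]

private lemma GK_cast_natCast (n m : ℕ) :
    ZMod.castHom (dvd_mul_right 2 n) (ZMod 2) ((m : ℕ) : ZMod (2*n)) = ((m:ℕ) : ZMod 2) :=
  map_natCast _ m

private lemma GK_x_even (n m : ℕ) : xK n ((2*m) • aK n) = (2*m) • aK n := by
  rw [GK_smul_a]
  ext
  · rfl
  · show 0 + ZMod.castHom _ (ZMod 2) (((2*m : ℕ) : ZMod (2*n))) = 0
    rw [GK_cast_natCast, Nat.cast_mul, ZMod.natCast_self, zero_mul, add_zero]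

private lemma GK_x_odd (n m : ℕ) : xK n ((2*m+1) • aK n) = (2*m+1) • aK n + bK n := by
  rw [GK_smul_a]
  ext
  · show ((2*m+1 : ℕ) : ZMod (2*n)) = ((2*m+1 : ℕ) : ZMod (2*n)) + (0 : ZMod (2*n))
    rw [add_zero]
  · show 0 + ZMod.castHom _ (ZMod 2) (((2*m+1 : ℕ) : ZMod (2*n))) = 0 + 1
    rw [GK_cast_natCast, Nat.cast_add, Nat.cast_mul, ZMod.natCast_self, zero_mul,
      zero_add, Nat.cast_one]

private lemma GK_x_b (n : ℕ) : xK n (bK n) = bK n := by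
  ext
  · rfl
  · show 1 + ZMod.castHom _ (ZMod 2) (0 : ZMod (2*n)) = 1
    rw [map_zero, add_zero]

private lemma GK_x_a (n : ℕ) : xK n (aK n) = aK n + bK n := by
  have := GK_x_odd n 0
  simpa using this

private lemma PK_succ {k : Type*} [Field k] (n : ℕ) (τ : GK n → GK n → kˣ)
    (hτ1 : ∀ g : GK n, τ g 0 = 1) (M : ℕ) :
    PK n τ (M+1) = PK n τ M * τ (aK n) (M • aK n) := by
  cases M with
  | zero => simp [PK, zero_smul, hτ1]
  | succ N =>
      show (∏ m ∈ Finset.Icc 1 (N+1), _) = (∏ m ∈ Finset.Icc 1 N, _) * _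
      rw [Finset.prod_Icc_succ_top (by omega)]


/-- With the data of `K(8n,σ,τ)`, for all `i, j ≥ 0`:
`P_{2i+1}^{2j} · σ(a)^j · σ(a^{2j})^i = P_{2j}^{2i} · σ(a^{2i+1})^j · (τ(b,a)/τ(b,a^{2i+1}))^j`. -/
theorem P_odd_relation {k : Type*} [Field k] (n : ℕ) (hn : 0 < n)
    (τ : GK n → GK n → kˣ) (σ : GK n → kˣ)
    (hcoc : ∀ g h l : GK n, τ g h * τ (g + h) l = τ h l * τ g (h + l))
    (hτ1 : ∀ g : GK n, τ g 0 = 1) (hτ1' : ∀ g : GK n, τ 0 g = 1)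
    (hσ1 : σ 0 = 1) (hσx : ∀ g : GK n, σ (xK n g) = σ g)
    (hcompat : ∀ g h : GK n,
      σ (g + h) * (σ g)⁻¹ * (σ h)⁻¹ = τ g h * τ (xK n g) (xK n h)) :
    ∀ i j : ℕ,
      PK n τ (2 * i + 1) ^ (2 * j) * σ (aK n) ^ j * σ ((2 * j) • aK n) ^ i =
        PK n τ (2 * j) ^ (2 * i) * σ ((2 * i + 1) • aK n) ^ j *
          (τ (bK n) (aK n) * (τ (bK n) ((2 * i + 1) • aK n))⁻¹) ^ j := by
  -- k-level versions of hypotheses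
  have hτ0 : ∀ g h : GK n, (τ g h : k) ≠ 0 := fun g h => Units.ne_zero _
  have hσ0 : ∀ g : GK n, (σ g : k) ≠ 0 := fun g => Units.ne_zero _
  have hcoc' : ∀ g h l : GK n,
      (τ g h : k) * (τ (g + h) l : k) = (τ h l : k) * (τ g (h + l) : k) := by
    intro g h l; exact_mod_cast congrArg Units.val (hcoc g h l)
  have hτ1k : ∀ g : GK n, (τ g 0 : k) = 1 := by
    intro g; simpa using congrArg Units.val (hτ1 g)
  have hσ1k : (σ 0 : k) = 1 := by simpa using congrArg Units.val hσ1
  have hσx' : ∀ g : GK n, (σ (xK n g) : k) = (σ g : k) := by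
    intro g; exact_mod_cast congrArg Units.val (hσx g)
  have hcompat' : ∀ g h : GK n,
      (σ (g + h) : k) = (σ g : k) * (σ h : k) * (τ g h : k) * (τ (xK n g) (xK n h) : k) := by
    intro g h
    have u := hcompat g h
    rw [mul_inv_eq_iff_eq_mul, mul_inv_eq_iff_eq_mul] at u
    have := congrArg Units.val u
    push_cast at this
    rw [this]; ring
  have pks : ∀ M : ℕ, (PK n τ (M+1) : k) = (PK n τ M : k) * (τ (aK n) (M • aK n) : k) := by
    intro M; exact_mod_cast congrArg Units.val (PK_succ n τ hτ1 M)
  set a := aK n with ha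
  set b := bK n with hb
  have x_a' : xK n a = a + b := GK_x_a n
  have x_b' : xK n b = b := GK_x_b n
  have x_even' : ∀ m, xK n ((2*m) • a) = (2*m) • a := GK_x_even n
  have x_odd' : ∀ m, xK n ((2*m+1) • a) = (2*m+1) • a + b := GK_x_odd n
  have bb' : b + b = 0 := GK_bb n
  -- τ(a,b)^2 = τ(b,a)^2
  have HA : (τ a b : k)^2 = (τ b a : k)^2 := by
    have p1 := hcompat' a b
    rw [x_a', x_b'] at p1
    have p2 := hcompat' b a
    rw [x_b', x_a'] at p2
    rw [add_comm b a] at p2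
    have p3 := hcoc' b a b
    rw [add_comm b a] at p3
    have q : (σ a : k) * (σ b : k) * ((τ a b : k) * (τ (a+b) b : k))
        = (σ a : k) * (σ b : k) * ((τ b a : k) * (τ b (a+b) : k)) := by
      linear_combination p2 - p1
    have q' := mul_left_cancel₀ (mul_ne_zero (hσ0 a) (hσ0 b)) q
    exact mul_right_cancel₀ (hτ0 b (a+b))
      (by linear_combination (τ b a : k) * q' - (τ a b : k) * p3)
  -- even(m) → odd(m)
  have step1 : ∀ m : ℕ,
      ((σ ((2*m) • a) : k) * (τ b a : k)^(3*m) =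
        (σ a : k)^(2*m) * (PK n τ (2*m) : k)^2 * ((τ b b : k) * (τ a b : k))^m) →
      ((σ ((2*m+1) • a) : k) * (τ b a : k)^(3*m+1) =
        (σ a : k)^(2*m+1) * (PK n τ (2*m+1) : k)^2 * (τ b ((2*m+1) • a) : k) *
          ((τ b b : k) * (τ a b : k))^m) := by
    intro m he
    have e1 : a + (2*m) • a = (2*m+1) • a := by
      rw [add_comm]; exact (succ_nsmul a (2*m)).symm
    have hc := hcompat' a ((2*m) • a)
    rw [x_a', x_even', e1] at hc
    have hco := hcoc' b a ((2*m) • a)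
    rw [e1, add_comm b a] at hco
    rw [pks (2*m)]
    linear_combination ((τ b a : k)^(3*m+1)) * hc
      + ((σ a : k) * (σ ((2*m) • a) : k) * (τ a ((2*m) • a) : k) * (τ b a : k)^(3*m)) * hco
      + ((σ a : k) * (τ a ((2*m) • a) : k)^2 * (τ b ((2*m+1) • a) : k)) * he
  -- odd(m) → even(m+1)
  have step2 : ∀ m : ℕ,
      ((σ ((2*m+1) • a) : k) * (τ b a : k)^(3*m+1) =
        (σ a : k)^(2*m+1) * (PK n τ (2*m+1) : k)^2 * (τ b ((2*m+1) • a) : k) *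
          ((τ b b : k) * (τ a b : k))^m) →
      ((σ ((2*(m+1)) • a) : k) * (τ b a : k)^(3*(m+1)) =
        (σ a : k)^(2*(m+1)) * (PK n τ (2*(m+1)) : k)^2 * ((τ b b : k) * (τ a b : k))^(m+1)) := by
    intro m ho
    have e2 : a + (2*m+1) • a = (2*m+1+1) • a := by
      rw [add_comm]; exact (succ_nsmul a (2*m+1)).symm
    have hσgb : (σ ((2*m+1) • a + b) : k) = (σ ((2*m+1) • a) : k) := by
      have h := hσx' ((2*m+1) • a); rw [x_odd'] at h; exact h
    have hc := hcompat' a ((2*m+1) • a)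
    rw [x_a', x_odd', e2] at hc
    have hc2 := hcompat' b ((2*m+1) • a)
    rw [x_b', x_odd', add_comm b ((2*m+1) • a), hσgb] at hc2
    have hc3 := hcompat' ((2*m+1) • a) b
    rw [x_odd', x_b', hσgb] at hc3
    have hvw : (τ b ((2*m+1) • a) : k) * (τ b ((2*m+1) • a + b) : k)
        = (τ ((2*m+1) • a) b : k) * (τ ((2*m+1) • a + b) b : k) := by
      have h23 : (σ b : k) * (σ ((2*m+1) • a) : k)
            * ((τ b ((2*m+1) • a) : k) * (τ b ((2*m+1) • a + b) : k))
          = (σ b : k) * (σ ((2*m+1) • a) : k)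
            * ((τ ((2*m+1) • a) b : k) * (τ ((2*m+1) • a + b) b : k)) := by
        linear_combination hc3 - hc2
      exact mul_left_cancel₀ (mul_ne_zero (hσ0 _) (hσ0 _)) h23
    have hco1 := hcoc' a b ((2*m+1) • a + b)
    have e3 : b + ((2*m+1) • a + b) = (2*m+1) • a := by
      rw [add_comm ((2*m+1) • a) b, ← add_assoc, bb', zero_add]
    rw [e3] at hco1
    have hco2 := hcoc' ((2*m+1) • a) b b
    rw [bb', hτ1k] at hco2
    rw [show 2*(m+1) = 2*m+1+1 from by ring, pks (2*m+1)]
    refine mul_right_cancel₀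
      (mul_ne_zero (hτ0 a b) (hτ0 b ((2*m+1) • a))) ?_
    linear_combination
      ((τ b a : k)^(3*m+3) * (τ a b : k) * (τ b ((2*m+1) • a) : k)) * hc
      + ((σ a : k) * (σ ((2*m+1) • a) : k) * (τ a ((2*m+1) • a) : k)
          * (τ b ((2*m+1) • a) : k) * (τ b a : k)^(3*m+3)) * hco1
      + ((σ a : k) * (τ a ((2*m+1) • a) : k)^2 * (τ b a : k)^(3*m+3)
          * (σ ((2*m+1) • a) : k)) * hvw
      + ((σ a : k) * (τ a ((2*m+1) • a) : k)^2 * (τ b a : k)^(3*m+3)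
          * (σ ((2*m+1) • a) : k)) * hco2
      + ((σ a : k) * (τ a ((2*m+1) • a) : k)^2 * (τ b a : k)^2 * (τ b b : k)) * ho
      - ((σ a : k)^(2*m+2) * (τ a ((2*m+1) • a) : k)^2 * (PK n τ (2*m+1) : k)^2
          * (τ b ((2*m+1) • a) : k) * (τ b b : k)^(m+1) * (τ a b : k)^m) * HA
  -- the induction
  have pk0 : (PK n τ 0 : kˣ) = 1 := by simp [PK]
  have key : ∀ m : ℕ,
      ((σ ((2*m) • a) : k) * (τ b a : k)^(3*m) =
        (σ a : k)^(2*m) * (PK n τ (2*m) : k)^2 * ((τ b b : k) * (τ a b : k))^m)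
      ∧ ((σ ((2*m+1) • a) : k) * (τ b a : k)^(3*m+1) =
        (σ a : k)^(2*m+1) * (PK n τ (2*m+1) : k)^2 * (τ b ((2*m+1) • a) : k) *
          ((τ b b : k) * (τ a b : k))^m) := by
    intro m
    induction m with
    | zero =>
        have he0 : (σ ((2*0) • a) : k) * (τ b a : k)^(3*0) =
            (σ a : k)^(2*0) * (PK n τ (2*0) : k)^2 * ((τ b b : k) * (τ a b : k))^0 := by
          norm_num [pk0, hσ1k]
        exact ⟨he0, step1 0 he0⟩
    | succ m ih =>
        have he := step2 m ih.2
        exact ⟨he, step1 (m+1) he⟩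
  -- final assembly
  intro i j
  have H1 := (key j).1
  have H2 := (key i).2
  have h1i : ((σ ((2*j) • a) : k) * (τ b a : k)^(3*j))^i =
      ((σ a : k)^(2*j) * (PK n τ (2*j) : k)^2 * ((τ b b : k) * (τ a b : k))^j)^i := by
    rw [H1]
  have h2j : ((σ ((2*i+1) • a) : k) * (τ b a : k)^(3*i+1))^j =
      ((σ a : k)^(2*i+1) * (PK n τ (2*i+1) : k)^2 * (τ b ((2*i+1) • a) : k) *
        ((τ b b : k) * (τ a b : k))^i)^j := by
    rw [H2]
  have hsplit : (τ b a * (τ b ((2*i+1) • a))⁻¹)^j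
      = τ b a ^ j * ((τ b ((2*i+1) • a))^j)⁻¹ := by
    rw [mul_pow, inv_pow]
  rw [hsplit, ← mul_assoc, eq_mul_inv_iff_mul_eq, ← Units.val_inj]
  push_cast
  refine mul_right_cancel₀ (pow_ne_zero (3*i*j) (hτ0 b a)) ?_
  linear_combination
    ((PK n τ (2*i+1) : k)^(2*j) * (σ a : k)^j * (τ b ((2*i+1) • a) : k)^j) * h1i
    - ((PK n τ (2*j) : k)^(2*i)) * h2j
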